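/- For any probability measure μ on ℝ^d there exists a point x ∈ ℝ^d such that the Tukey (halfspace) depth of x, defined as inf over all open halfspaces H containing x of μ(H), is at least 1/(d+1). -/

import Mathlib

open MeasureTheory
open scoped ENNReal RealInnerProductSpace

def IsOpenHalfspace {d : ℕ} (H : Set (EuclideanSpace ℝ (Fin d))) : Prop :=
  ∃ (u : EuclideanSpace ℝ (Fin d)) (c : ℝ), u ≠ 0 ∧ H = {y | c < ⟪u, y⟫}

set_option maxHeartbeats 1000000 in
theorem exists_point_tukey_depth_ge_inv_dim_add_one (d : ℕ)
    (μ : Measure (EuclideanSpace ℝ (Fin d))) [IsProbabilityMeasure μ] :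
    ∃ x : EuclideanSpace ℝ (Fin d),
      (1 : ℝ≥0∞) / ((d : ℝ≥0∞) + 1) ≤
        ⨅ (H : Set (EuclideanSpace ℝ (Fin d))) (_ : IsOpenHalfspace H) (_ : x ∈ H), μ H := by
  classical
  set E := EuclideanSpace ℝ (Fin d) with hE
  set c : ℝ≥0∞ := (1 : ℝ≥0∞) / ((d : ℝ≥0∞) + 1) with hc
  have hd1 : ((d : ℝ≥0∞) + 1) ≠ 0 := by simp
  have hd2 : ((d : ℝ≥0∞) + 1) ≠ ∞ := by
    simp [ENNReal.add_ne_top]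
  have hcpos : 0 < c := ENNReal.div_pos one_ne_zero hd2
  have hmul : ((d : ℝ≥0∞) + 1) * c = 1 := by
    rw [hc, ENNReal.mul_div_cancel hd1 hd2]
  -- choose a big ball capturing most of the mass
  obtain ⟨R, hR⟩ : ∃ R : ℕ, μ ((Metric.closedBall (0 : E) R)ᶜ) < c := by
    have hanti : Antitone (fun n : ℕ => (Metric.closedBall (0 : E) n)ᶜ) := by
      intro m n hmn
      exact Set.compl_subset_compl.2
        (Metric.closedBall_subset_closedBall (by exact_mod_cast hmn))
    have hiInter : (⋂ n : ℕ, (Metric.closedBall (0 : E) n)ᶜ) = ∅ := by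
      rw [← Set.compl_iUnion, Set.compl_empty_iff]
      ext x
      simp only [Set.mem_iUnion, Metric.mem_closedBall, dist_zero_right, Set.mem_univ, iff_true]
      obtain ⟨n, hn⟩ := exists_nat_ge ‖x‖
      exact ⟨n, hn⟩
    have htend := tendsto_measure_iInter_atTop (μ := μ)
      (fun n => (measurableSet_closedBall.compl).nullMeasurableSet) hanti
      ⟨0, measure_ne_top μ _⟩
    rw [hiInter, measure_empty] at htend
    have := htend.eventually_lt_const hcpos
    exact this.exists
  set B := Metric.closedBall (0 : E) R with hB
  -- index type: open halfspaces of small measure; K i is the complementary closed halfspace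
  let ι := {p : E × ℝ // μ {y : E | p.2 < ⟪p.1, y⟫} < c}
  let K : ι → Set E := fun i => {y : E | ⟪i.1.1, y⟫ ≤ i.1.2}
  -- the auxiliary family over Option ι (adding the ball)
  let G : Option ι → Set E := fun o => o.elim B fun i => K i
  have hlin : ∀ u : E, IsLinearMap ℝ (fun y : E => ⟪u, y⟫) := fun u =>
    ⟨fun x y => inner_add_right u x y, fun r x => real_inner_smul_right u x r⟩
  have hGconv : ∀ o : Option ι, Convex ℝ (G o) := by
    rintro (_ | i)
    · exact convex_closedBall _ _
    · exact convex_halfSpace_le (hlin i.1.1) i.1.2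
  have hGcompl : ∀ o : Option ι, μ ((G o)ᶜ) < c := by
    rintro (_ | i)
    · exact hR
    · have : (G (some i))ᶜ = {y : E | i.1.2 < ⟪i.1.1, y⟫} := by
        ext y; simp [G, K, not_le]
      rw [this]; exact i.2
  have hfr : Module.finrank ℝ E = d := finrank_euclideanSpace_fin
  -- key: any family of at most d+1 of the G's has nonempty intersection
  have key : ∀ s : Finset (Option ι), s.card ≤ d + 1 → (⋂ o ∈ s, G o).Nonempty := by
    intro s hcard
    rcases s.eq_empty_or_nonempty with rfl | hsne
    · simp
    set m : ℝ≥0∞ := s.sup fun o => μ ((G o)ᶜ) with hm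
    have hmc : m < c := (Finset.sup_lt_iff hcpos).2 fun o _ => hGcompl o
    have hcard' : (s.card : ℝ≥0∞) ≤ (d : ℝ≥0∞) + 1 := by
      exact_mod_cast (by exact_mod_cast hcard : (s.card : ℝ≥0∞) ≤ ((d : ℕ) + 1 : ℕ))
    have hlt : μ (⋃ o ∈ s, (G o)ᶜ) < 1 := by
      calc μ (⋃ o ∈ s, (G o)ᶜ) ≤ ∑ o ∈ s, μ ((G o)ᶜ) := measure_biUnion_finset_le s _
        _ ≤ ∑ _o ∈ s, m := Finset.sum_le_sum fun o ho => by rw [hm]; exact Finset.le_sup (f := fun o => μ ((G o)ᶜ)) ho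
        _ = (s.card : ℝ≥0∞) * m := by rw [Finset.sum_const, nsmul_eq_mul]
        _ ≤ ((d : ℝ≥0∞) + 1) * m := by gcongr
        _ < ((d : ℝ≥0∞) + 1) * c := by
            exact ENNReal.mul_lt_mul_right hd1 hd2 hmc
        _ = 1 := hmul
    have hne : (⋃ o ∈ s, (G o)ᶜ) ≠ Set.univ := by
      intro h
      rw [h, measure_univ] at hlt
      exact lt_irrefl _ hlt
    have heq : (⋂ o ∈ s, G o) = (⋃ o ∈ s, (G o)ᶜ)ᶜ := by
      simp [Set.compl_iUnion]
    rw [heq]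
    exact Set.nonempty_compl.2 hne
  -- apply Helly for compact convex sets to the family (K i ∩ B)
  have hcompact : (⋂ i : ι, (K i ∩ B)).Nonempty := by
    apply Convex.helly_theorem_compact' (𝕜 := ℝ)
    · intro i
      exact (convex_halfSpace_le (hlin i.1.1) i.1.2).inter (convex_closedBall _ _)
    · intro i
      exact (isCompact_closedBall _ _).inter_left
        (isClosed_le ((continuous_const (y := i.1.1)).inner continuous_id) continuous_const)
    · intro I hI
      obtain ⟨x, hx⟩ := Convex.helly_theorem' (𝕜 := ℝ) (F := G)
        (s := insert none (I.image some)) (fun o _ => hGconv o)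
        (fun J _ hJ => key J (hfr ▸ hJ))
      refine ⟨x, ?_⟩
      simp only [Set.mem_iInter₂, Finset.mem_insert, Finset.mem_image] at hx
      refine Set.mem_iInter₂.2 fun i hi => ?_
      exact ⟨hx (some i) (Or.inr ⟨i, hi, rfl⟩), hx none (Or.inl rfl)⟩
  obtain ⟨x, hx⟩ := hcompact
  refine ⟨x, le_iInf fun H => le_iInf fun hH => le_iInf fun hxH => ?_⟩
  by_contra h
  push_neg at h
  obtain ⟨u, c0, hu, rfl⟩ := hH
  have hxK : x ∈ K ⟨(u, c0), h⟩ := by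
    have := Set.mem_iInter.1 hx ⟨(u, c0), h⟩
    exact this.1
  exact absurd hxH (by simpa [K, not_lt] using hxK)
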